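/- For every real number x that is not an integer multiple of 2π, the series ∑_{n∈ℤ} 1/(x - 2πn)² converges and equals 1/(2(1 - cos x)). -/

import Mathlib

open Real

open scoped ENNReal in
open Complex MeasureTheory AddCircle Set in
theorem stmt0 (x : ℝ) (hx : ∀ n : ℤ, x ≠ 2 * π * n) :
    HasSum (fun n : ℤ => 1 / (x - 2 * π * n) ^ 2) (1 / (2 * (1 - Real.cos x))) := by
  have hπ : (0:ℝ) < 2 * π := by positivity
  haveI : Fact (0 < 2 * π) := ⟨hπ⟩
  set g : ℝ → ℂ := fun t => Complex.exp (((x / (2 * π)) * t : ℝ) * Complex.I) with hg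
  set F : AddCircle (2 * π) → ℂ := liftIoc (2 * π) 0 g with hF
  have hgc : Continuous g := by
    apply Complex.continuous_exp.comp
    continuity
  have hFmeas : Measurable F := by
    have : F = (fun y : Ioc (0:ℝ) (0 + 2*π) => g y) ∘ (measurableEquivIoc (2*π) 0) := rfl
    rw [this]
    exact (hgc.measurable.comp measurable_subtype_coe).comp
      (measurableEquivIoc (2*π) 0).measurable
  have hFnorm : ∀ z, ‖F z‖ = 1 := by
    intro z
    show ‖g _‖ = 1
    rw [hg]
    exact Complex.norm_exp_ofReal_mul_I _
  have hmem : MemLp F 2 haarAddCircle :=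
    MemLp.of_bound hFmeas.aestronglyMeasurable 1
      (Filter.Eventually.of_forall fun z => (hFnorm z).le)
  set fLp := hmem.toLp F with hfLp
  have hcoeff : ∀ n : ℤ, fourierCoeff fLp n = fourierCoeff F n := by
    intro n
    apply integral_congr_ae
    filter_upwards [hmem.coeFn_toLp] with t ht
    rw [ht]
  -- Parseval
  have hparse : ∑' n : ℤ, ‖fourierCoeff fLp n‖ ^ 2 = 1 := by
    rw [tsum_sq_fourierCoeff fLp]
    have : ∫ t : AddCircle (2*π), ‖fLp t‖^2 ∂haarAddCircle
        = ∫ _t : AddCircle (2*π), (1:ℝ) ∂haarAddCircle := by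
      apply integral_congr_ae
      filter_upwards [hmem.coeFn_toLp] with t ht
      rw [ht, hFnorm t]; norm_num
    rw [this]; simp
  have hsummable : Summable fun n : ℤ => ‖fourierCoeff fLp n‖ ^ 2 := by
    have h1 := (lp.memℓp (fourierBasis.repr fLp)).summable
      (by norm_num : 0 < (2:ℝ≥0∞).toReal)
    refine h1.congr fun n => ?_
    rw [fourierBasis_repr,
      show ((2:ℝ≥0∞)).toReal = ((2:ℕ):ℝ) by norm_num, Real.rpow_natCast]
  have hsum2 : HasSum (fun n : ℤ => ‖fourierCoeff fLp n‖ ^ 2) 1 :=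
    hparse ▸ hsummable.hasSum
  -- norm of exp(θI) - 1
  have key : ∀ θ : ℝ, ‖Complex.exp ((θ:ℂ) * Complex.I) - 1‖^2 = 2 - 2*Real.cos θ := by
    intro θ
    have h1 : Complex.exp ((θ:ℂ) * Complex.I) - 1
        = ((Real.cos θ - 1 : ℝ) : ℂ) + ((Real.sin θ : ℝ) : ℂ) * Complex.I := by
      rw [Complex.exp_mul_I, ← Complex.ofReal_cos, ← Complex.ofReal_sin]
      push_cast
      ring
    rw [h1, Complex.sq_norm, Complex.normSq_add_mul_I]
    nlinarith [Real.sin_sq_add_cos_sq θ]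
  -- value of the coefficients
  have habs : ∀ n : ℤ, ‖fourierCoeff F n‖ ^ 2
      = (2 - 2 * Real.cos x) * (1 / (x - 2*π*n)^2) := by
    intro n
    have hne : (x / (2*π) - n) ≠ 0 := by
      intro h
      apply hx n
      field_simp at h
      linarith
    set β : ℂ := ((x / (2*π) - n : ℝ) : ℂ) * Complex.I with hβ
    have hβne : β ≠ 0 :=
      mul_ne_zero (Complex.ofReal_ne_zero.2 hne) Complex.I_ne_zero
    have h1 : fourierCoeff F n
        = (1/(2*π) : ℝ) • ((Complex.exp (β * (2*π)) - 1)/β) := by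
      rw [hF, fourierCoeff_liftIoc_eq, fourierCoeffOn_eq_integral]
      have hint : ∀ t ∈ Set.uIcc (0:ℝ) (0 + 2*π),
          fourier (-n) (t : AddCircle (0 + 2*π - 0)) • g t = Complex.exp (β * t) := by
        intro t _
        rw [fourier_coe_apply, hg]
        simp only [smul_eq_mul, ← Complex.exp_add]
        congr 1
        have hπ0 : (π:ℂ) ≠ 0 := Complex.ofReal_ne_zero.2 Real.pi_ne_zero
        rw [hβ]
        push_cast
        field_simp
        ring
      rw [intervalIntegral.integral_congr hint, integral_exp_mul_complex hβne]
      norm_num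
    have hb2 : β * (2*π) = ((x - 2*π*n : ℝ) : ℂ) * Complex.I := by
      rw [hβ]
      have : ((x / (2*π) - n : ℝ) : ℂ) * (2*π) = ((x - 2*π*n : ℝ) : ℂ) := by
        push_cast
        have hπ0 : (π:ℂ) ≠ 0 := Complex.ofReal_ne_zero.2 Real.pi_ne_zero
        field_simp
      rw [mul_comm ((x / (2*π) - n : ℝ) : ℂ) Complex.I, mul_assoc, this, mul_comm]
    have hnormβ : ‖β‖ = |x / (2*π) - n| := by
      rw [hβ, norm_mul, Complex.norm_I, mul_one,
        Complex.norm_real, Real.norm_eq_abs]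
    have hcos : Real.cos (x - 2*π*n) = Real.cos x := by
      have h : x - 2*π*n = x - n * (2*π) := by ring
      rw [h, Real.cos_sub_int_mul_two_pi]
    have hxn : x - 2*π*n ≠ 0 := sub_ne_zero.2 (hx n)
    simp only [h1, hb2, norm_smul, norm_div, mul_pow, div_pow, key, hnormβ,
      Real.norm_eq_abs, sq_abs, hcos]
    field_simp
  have hc1 : Real.cos x ≠ 1 := by
    intro h
    rcases (Real.cos_eq_one_iff x).1 h with ⟨n, hn⟩
    exact hx n (by linarith)
  have h2c : (2 - 2*Real.cos x) ≠ 0 := by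
    have h := Real.cos_le_one x
    rcases lt_or_eq_of_le h with h'|h'
    · linarith
    · exact absurd h' hc1
  have hfun : (fun n : ℤ => ‖fourierCoeff fLp n‖^2)
      = fun n : ℤ => (2 - 2*Real.cos x) * (1/(x-2*π*n)^2) := by
    funext n
    rw [hcoeff n, habs n]
  rw [hfun] at hsum2
  have final := hsum2.mul_left ((2 - 2*Real.cos x)⁻¹)
  simp only [inv_mul_cancel_left₀ h2c, mul_one] at final
  have hval : (2 - 2*Real.cos x)⁻¹ = 1 / (2 * (1 - Real.cos x)) := by
    rw [inv_eq_one_div]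
    congr 1
    ring
  rwa [hval] at final
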